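/- Let X be a countable type, w : X → ℤ a function, R ∈ ℕ, and let A be a bounded linear operator on the Hilbert space ℓ²(X) whose matrix coefficients satisfy ⟨A e_x, e_y⟩ = 0 whenever |w(x) − w(y)| > R (where (e_x) is the standard orthonormal basis). Then for every t ≥ 0 there exists a bounded linear operator A_t on ℓ²(X) with matrix coefficients ⟨A_t e_x, e_y⟩ = e^{t·(w(y) − w(x))}·⟨A e_x, e_y⟩ for all x, y, and ‖A_t‖ ≤ (2R+1)·e^{tR}·‖A‖. -/

import Mathlib

open scoped BigOperators ComplexConjugate ENNReal

noncomputable section BandAux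

variable {X : Type*}

private lemma memℓp_mul_aux (u : X → ℂ) (hu : ∀ x, ‖u x‖ = 1) (f : lp (fun _ : X => ℂ) 2) :
    Memℓp (fun x => u x * f x) 2 := by
  apply memℓp_gen
  have h := (lp.memℓp f).summable (p := 2) (by norm_num)
  simpa [norm_mul, hu] using h

private def mulOp (u : X → ℂ) (hu : ∀ x, ‖u x‖ = 1) :
    lp (fun _ : X => ℂ) 2 →L[ℂ] lp (fun _ : X => ℂ) 2 :=
  LinearMap.mkContinuous
    { toFun := fun f => ⟨fun x => u x * f x, memℓp_mul_aux u hu f⟩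
      map_add' := fun f g => by
        apply lp.ext; funext x
        simp [lp.coeFn_add, mul_add]; rfl
      map_smul' := fun c f => by
        apply lp.ext; funext x
        simp [lp.coeFn_smul, smul_eq_mul]
        ring }
    1
    (by
      intro f
      rw [one_mul]
      have h2 : (0:ℝ) < (2:ℝ≥0∞).toReal := by norm_num
      apply le_of_eq
      rw [lp.norm_eq_tsum_rpow h2, lp.norm_eq_tsum_rpow h2]
      congr 1
      apply tsum_congr
      intro x
      simp [norm_mul, hu])

private lemma mulOp_apply (u : X → ℂ) (hu : ∀ x, ‖u x‖ = 1) (f : lp (fun _ : X => ℂ) 2)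
    (x : X) : (mulOp u hu f) x = u x * f x := rfl

private lemma mulOp_single [DecidableEq X] (u : X → ℂ) (hu : ∀ x, ‖u x‖ = 1) (x : X) :
    mulOp u hu (lp.single 2 x 1) = u x • lp.single 2 x 1 := by
  apply lp.ext; funext y
  rw [lp.coeFn_smul]
  by_cases h : y = x
  · subst h
    simp [mulOp_apply, lp.single_apply_self]
  · simp [mulOp_apply, lp.single_apply_ne _ _ _ h, Pi.single_apply, h]

private lemma mulOp_norm_le (u : X → ℂ) (hu : ∀ x, ‖u x‖ = 1) : ‖mulOp u hu‖ ≤ 1 :=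
  LinearMap.mkContinuous_norm_le _ zero_le_one _

end BandAux

/-- **Conjugating a band operator by an exponential weight.**
If `A` is a bounded operator on `ℓ²(X)` whose matrix coefficients vanish whenever
`|w(x) - w(y)| > R`, then for every `t ≥ 0` there is a bounded operator `A_t` with matrix
coefficients `⟨A_t e_x, e_y⟩ = e^{t (w(y) - w(x))} ⟨A e_x, e_y⟩` and
`‖A_t‖ ≤ (2R+1) e^{tR} ‖A‖`. -/
theorem band_operator_exponential_conjugation
    {X : Type*} [Countable X] [DecidableEq X]
    (w : X → ℤ) (R : ℕ)
    (A : lp (fun _ : X => ℂ) 2 →L[ℂ] lp (fun _ : X => ℂ) 2)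
    (hband : ∀ x y : X, (R : ℤ) < |w x - w y| →
      (inner ℂ (A (lp.single 2 x 1)) (lp.single 2 y 1) : ℂ) = 0)
    (t : ℝ) (ht : 0 ≤ t) :
    ∃ At : lp (fun _ : X => ℂ) 2 →L[ℂ] lp (fun _ : X => ℂ) 2,
      (∀ x y : X,
        (inner ℂ (At (lp.single 2 x 1)) (lp.single 2 y 1) : ℂ) =
          (Real.exp (t * ((w y : ℝ) - (w x : ℝ))) : ℂ) *
            (inner ℂ (A (lp.single 2 x 1)) (lp.single 2 y 1) : ℂ)) ∧
      ‖At‖ ≤ (2 * (R : ℝ) + 1) * Real.exp (t * R) * ‖A‖ := by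
  classical
  set N : ℕ := 2 * R + 1 with hNdef
  have hNpos : 0 < N := Nat.succ_pos _
  have hN0 : (N : ℂ) ≠ 0 := by exact_mod_cast hNpos.ne'
  set ω : ℂ := Complex.exp (2 * Real.pi * Complex.I / N) with hωdef
  have hprim : IsPrimitiveRoot ω N := Complex.isPrimitiveRoot_exp N hNpos.ne'
  have hωnorm : ‖ω‖ = 1 := by
    rw [hωdef, Complex.norm_exp]
    have : (2 * (Real.pi : ℂ) * Complex.I / N).re = 0 := by
      simp [Complex.div_re, Complex.mul_re, Complex.mul_im]
    rw [this, Real.exp_zero]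
  have hω0 : ω ≠ 0 := Complex.exp_ne_zero _
  have hznorm : ∀ n : ℤ, ‖ω ^ n‖ = 1 := fun n => by rw [norm_zpow, hωnorm, one_zpow]
  have hconj : ∀ n : ℤ, (starRingEnd ℂ) (ω ^ n) = ω ^ (-n) := by
    intro n
    have h1 : ω * (starRingEnd ℂ) ω = 1 := by
      rw [Complex.mul_conj]
      norm_cast
      rw [Complex.normSq_eq_norm_sq, hωnorm, one_pow]
    have h2 : (starRingEnd ℂ) ω = ω⁻¹ :=
      eq_inv_of_mul_eq_one_left (by rw [mul_comm] at h1; exact h1)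
    rw [map_zpow₀, h2, inv_zpow, zpow_neg]
  -- geometric sum of roots of unity
  have hsum : ∀ k m : ℤ, k ∈ Finset.Icc (-(R:ℤ)) (R:ℤ) → m ∈ Finset.Icc (-(R:ℤ)) (R:ℤ) →
      (∑ j ∈ Finset.range N, ω ^ ((j:ℤ) * (k - m))) = if k = m then (N:ℂ) else 0 := by
    intro k m hk hm
    rcases eq_or_ne k m with rfl | hne
    · simp
    · rw [if_neg hne]
      have hrw : ∀ j ∈ Finset.range N, ω ^ ((j:ℤ) * (k - m)) = (ω ^ (k - m)) ^ j := by
        intro j _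
        rw [← zpow_natCast (ω ^ (k - m)) j, ← zpow_mul, mul_comm]
      rw [Finset.sum_congr rfl hrw]
      have hζne : ω ^ (k - m) ≠ 1 := by
        intro hone
        have hdvd : (N : ℤ) ∣ (k - m) := (hprim.zpow_eq_one_iff_dvd _).mp hone
        simp only [Finset.mem_Icc] at hk hm
        have habs : |k - m| < (N : ℤ) := by
          rw [abs_lt]
          push_cast [hNdef]
          omega
        have : k - m = 0 := by
          rcases hdvd with ⟨d, hd⟩
          rcases eq_or_ne d 0 with rfl | hd0
          · simpa using hd
          · exfalso
            have : (N : ℤ) ≤ |k - m| := by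
              rw [hd, abs_mul, abs_of_nonneg (by positivity : (0:ℤ) ≤ (N:ℤ))]
              nlinarith [Int.one_le_abs hd0, (by positivity : (0:ℤ) < (N:ℤ))]
            omega
        exact hne (by omega)
      have hζN : (ω ^ (k - m)) ^ N = 1 := by
        rw [← zpow_natCast (ω ^ (k - m)) N, ← zpow_mul, mul_comm, zpow_mul,
          hprim.zpow_eq_one, one_zpow]
      rw [geom_sum_eq hζne, hζN, sub_self, zero_div]
  -- an abstract family of "twisted" operators
  obtain ⟨B, hBentry, hBnorm⟩ :
      ∃ B : ℕ → (lp (fun _ : X => ℂ) 2 →L[ℂ] lp (fun _ : X => ℂ) 2),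
        (∀ (j : ℕ) (x y : X),
          (inner ℂ (B j (lp.single 2 x 1)) (lp.single 2 y 1) : ℂ) =
            ω ^ (-(j:ℤ) * (w y - w x)) *
              (inner ℂ (A (lp.single 2 x 1)) (lp.single 2 y 1) : ℂ)) ∧
        (∀ j : ℕ, ‖B j‖ ≤ ‖A‖) := by
    have hu : ∀ n : ℤ, ∀ x : X, ‖(fun x => ω ^ (n * w x)) x‖ = 1 := fun n x => hznorm _
    refine ⟨fun j => (mulOp _ (hu (j:ℤ))).comp (A.comp (mulOp _ (hu (-(j:ℤ))))), ?_, ?_⟩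
    · intro j x y
      have h1 : ((mulOp _ (hu (j:ℤ))).comp (A.comp (mulOp _ (hu (-(j:ℤ))))))
            (lp.single 2 x 1) =
          (ω ^ (-(j:ℤ) * w x)) • (mulOp _ (hu (j:ℤ))) (A (lp.single 2 x 1)) := by
        simp only [ContinuousLinearMap.comp_apply]
        rw [mulOp_single, map_smul, map_smul]
      rw [h1, inner_smul_left]
      rw [lp.inner_single_right, lp.inner_single_right]
      have h2 : ((mulOp _ (hu (j:ℤ))) (A (lp.single 2 x 1)) : ∀ _ : X, ℂ) y
          = ω ^ ((j:ℤ) * w y) * (A (lp.single 2 x 1) : ∀ _ : X, ℂ) y := rfl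
      rw [RCLike.inner_apply, RCLike.inner_apply, h2]
      simp only [map_mul, hconj, neg_neg, mul_one]
      rw [show (-(j:ℤ)) * (w y - w x) = (j:ℤ) * w x + -((j:ℤ) * w y) by ring, zpow_add₀ hω0]
      ring
    · intro j
      calc ‖(mulOp _ (hu (j:ℤ))).comp (A.comp (mulOp _ (hu (-(j:ℤ)))))‖
          ≤ ‖mulOp _ (hu (j:ℤ))‖ * ‖A.comp (mulOp _ (hu (-(j:ℤ))))‖ :=
            ContinuousLinearMap.opNorm_comp_le _ _
        _ ≤ ‖mulOp _ (hu (j:ℤ))‖ * (‖A‖ * ‖mulOp _ (hu (-(j:ℤ)))‖) :=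
            mul_le_mul_of_nonneg_left (ContinuousLinearMap.opNorm_comp_le _ _) (norm_nonneg _)
        _ ≤ 1 * (‖A‖ * 1) := by
            apply mul_le_mul (mulOp_norm_le _ _)
            · exact mul_le_mul_of_nonneg_left (mulOp_norm_le _ _) (norm_nonneg _)
            · positivity
            · norm_num
        _ = ‖A‖ := by ring
  -- the candidate operator
  set c : ℤ → ℕ → ℂ := fun k j => (N:ℂ)⁻¹ * (Real.exp (t * k) : ℂ) * ω ^ (-(j:ℤ) * k) with hcdef
  refine ⟨∑ k ∈ Finset.Icc (-(R:ℤ)) (R:ℤ), ∑ j ∈ Finset.range N, c k j • B j, ?_, ?_⟩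
  · -- matrix coefficients
    intro x y
    set a : ℂ := (inner ℂ (A (lp.single 2 x 1)) (lp.single 2 y 1) : ℂ) with hadef
    set m : ℤ := w y - w x with hmdef
    have hentry : (inner ℂ
          ((∑ k ∈ Finset.Icc (-(R:ℤ)) (R:ℤ), ∑ j ∈ Finset.range N, c k j • B j)
            (lp.single 2 x 1)) (lp.single 2 y 1) : ℂ) =
        ∑ k ∈ Finset.Icc (-(R:ℤ)) (R:ℤ), ∑ j ∈ Finset.range N,
          ((N:ℂ)⁻¹ * (Real.exp (t * k) : ℂ) * ω ^ ((j:ℤ) * k)) * (ω ^ (-(j:ℤ) * m) * a) := by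
      simp only [ContinuousLinearMap.sum_apply, ContinuousLinearMap.smul_apply]
      rw [sum_inner]
      refine Finset.sum_congr rfl fun k _ => ?_
      rw [sum_inner]
      refine Finset.sum_congr rfl fun j _ => ?_
      rw [inner_smul_left, hBentry j x y, hcdef]
      simp only [map_mul, map_inv₀, Complex.conj_natCast, Complex.conj_ofReal, hconj, neg_neg]
      rw [hmdef, hadef]
      ring
    rw [hentry]
    by_cases ha : a = 0
    · simp [ha]
    · have hm : m ∈ Finset.Icc (-(R:ℤ)) (R:ℤ) := by
        by_contra hmem
        apply ha
        rw [hadef]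
        apply hband
        simp only [Finset.mem_Icc, not_and_or, not_le, hmdef] at hmem
        rw [lt_abs]
        omega
      have hstep : ∀ k ∈ Finset.Icc (-(R:ℤ)) (R:ℤ),
          (∑ j ∈ Finset.range N,
            ((N:ℂ)⁻¹ * (Real.exp (t * k) : ℂ) * ω ^ ((j:ℤ) * k)) * (ω ^ (-(j:ℤ) * m) * a)) =
          ((N:ℂ)⁻¹ * (Real.exp (t * k) : ℂ) * a) * (if k = m then (N:ℂ) else 0) := by
        intro k hk
        rw [← hsum k m hk hm, Finset.mul_sum]
        refine Finset.sum_congr rfl fun j _ => ?_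
        have hzz : ω ^ ((j:ℤ) * k) * ω ^ (-(j:ℤ) * m) = ω ^ ((j:ℤ) * (k - m)) := by
          rw [← zpow_add₀ hω0]
          congr 1
          ring
        calc ((N:ℂ)⁻¹ * (Real.exp (t * k) : ℂ) * ω ^ ((j:ℤ) * k)) * (ω ^ (-(j:ℤ) * m) * a)
            = ((N:ℂ)⁻¹ * (Real.exp (t * k) : ℂ) * a) *
                (ω ^ ((j:ℤ) * k) * ω ^ (-(j:ℤ) * m)) := by ring
          _ = ((N:ℂ)⁻¹ * (Real.exp (t * k) : ℂ) * a) * ω ^ ((j:ℤ) * (k - m)) := by rw [hzz]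
      rw [Finset.sum_congr rfl hstep]
      rw [Finset.sum_eq_single m
        (fun k _ hkm => by rw [if_neg hkm, mul_zero])
        (fun hmem => absurd hm hmem)]
      rw [if_pos rfl]
      have hNe : (N:ℂ)⁻¹ * (Real.exp (t * m) : ℂ) * a * N = (Real.exp (t * m) : ℂ) * a := by
        field_simp
      rw [hNe]
      congr 2
      push_cast [hmdef]
      ring
  · -- norm bound
    have hcnorm : ∀ k ∈ Finset.Icc (-(R:ℤ)) (R:ℤ), ∀ j : ℕ,
        ‖c k j • B j‖ ≤ (N:ℝ)⁻¹ * (Real.exp (t * R) * ‖A‖) := by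
      intro k hk j
      have hcval : ‖c k j‖ = (N:ℝ)⁻¹ * Real.exp (t * k) := by
        rw [hcdef]
        simp only [norm_mul, hznorm, mul_one, norm_inv, Complex.norm_natCast,
          Complex.norm_real, Real.norm_eq_abs, abs_of_pos (Real.exp_pos _)]
      refine le_trans (ContinuousLinearMap.opNorm_smul_le _ _) ?_
      rw [hcval]
      have hexp : Real.exp (t * k) ≤ Real.exp (t * R) := by
        apply Real.exp_le_exp.mpr
        apply mul_le_mul_of_nonneg_left _ ht
        simp only [Finset.mem_Icc] at hk
        exact_mod_cast hk.2
      calc (N:ℝ)⁻¹ * Real.exp (t * k) * ‖B j‖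
          ≤ (N:ℝ)⁻¹ * Real.exp (t * R) * ‖A‖ := by
            apply mul_le_mul
            · exact mul_le_mul_of_nonneg_left hexp (by positivity)
            · exact hBnorm j
            · exact norm_nonneg _
            · positivity
        _ = (N:ℝ)⁻¹ * (Real.exp (t * R) * ‖A‖) := by ring
    have hNe : (N:ℝ) ≠ 0 := by exact_mod_cast hNpos.ne'
    calc ‖∑ k ∈ Finset.Icc (-(R:ℤ)) (R:ℤ), ∑ j ∈ Finset.range N, c k j • B j‖
        ≤ ∑ k ∈ Finset.Icc (-(R:ℤ)) (R:ℤ), ‖∑ j ∈ Finset.range N, c k j • B j‖ :=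
          norm_sum_le _ _
      _ ≤ ∑ k ∈ Finset.Icc (-(R:ℤ)) (R:ℤ), ∑ j ∈ Finset.range N, ‖c k j • B j‖ :=
          Finset.sum_le_sum fun k _ => norm_sum_le _ _
      _ ≤ ∑ k ∈ Finset.Icc (-(R:ℤ)) (R:ℤ), ∑ j ∈ Finset.range N,
            (N:ℝ)⁻¹ * (Real.exp (t * R) * ‖A‖) :=
          Finset.sum_le_sum fun k hk => Finset.sum_le_sum fun j _ => hcnorm k hk j
      _ = ((Finset.Icc (-(R:ℤ)) (R:ℤ)).card : ℝ) *
            ((N : ℝ) * ((N:ℝ)⁻¹ * (Real.exp (t * R) * ‖A‖))) := by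
          rw [Finset.sum_const, Finset.sum_const, Finset.card_range]
          push_cast
          ring
      _ = (2 * (R : ℝ) + 1) * Real.exp (t * R) * ‖A‖ := by
          rw [Int.card_Icc]
          have hcard : ((R:ℤ) + 1 - (-(R:ℤ))).toNat = 2 * R + 1 := by omega
          rw [hcard, mul_inv_cancel_left₀ hNe]
          push_cast
          ring
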